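/- On nine qubits labeled 1,…,9, for every state |ψ⟩ = ∑_{y∈{0,1}³} ψ_y |y⟩ of qubits 1,2,3, projecting qubits 1,…,6 onto ⟨+|^{⊗6} in the state obtained by applying the hyperedge C_{{1,2,3}} and the graph edges {i,i+3} and {i+3,i+6} (i = 1,2,3) to |ψ⟩ on qubits 1,2,3 and |+⟩ on qubits 4,…,9 teleports CCZ|ψ⟩ to qubits 7,8,9: ( ⟨+|^{⊗6}_{1,…,6} ⊗ I ) ∏_{i=1}^{3} C_{{i,i+3}} C_{{i+3,i+6}} · C_{{1,2,3}} ( |ψ⟩_{123} ⊗ |+⟩^{⊗6}_{4,…,9} ) = (1/8) ∑_{y∈{0,1}³} (−1)^{y₁y₂y₃} ψ_y |y⟩_{789}. This is the all-plus-outcome (byproduct-free) case of the measurement pattern implementing the nearest-neighbor logical CCZ gate in the MBQC scheme of Appendix B. -/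

import Mathlib

noncomputable section

/-- The state space of qubits labeled by `ι`: a vector is the family of its
amplitudes in the computational basis `{|x⟩ : x : ι → Bool}`. -/
abbrev QState (ι : Type) := (ι → Bool) → ℂ

/-- The sign `(−1)^{∏_{i∈e} x_i}` of the generalized controlled-Z gate `C_e`
on the basis vector `|x⟩`. -/
def csign {ι : Type} (e : Finset ι) (x : ι → Bool) : ℂ :=
  if ∀ i ∈ e, x i = true then -1 else 1

/-- The generalized controlled-Z gate `C_e`, the diagonal unitary with
`C_e |x⟩ = (−1)^{∏_{i∈e} x_i} |x⟩`. -/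
def Cgate {ι : Type} (e : Finset ι) (ψ : QState ι) : QState ι :=
  fun x => csign e x * ψ x

/-- The Hadamard gate `H_i` on qubit `i`, acting as the identity on all other
qubits. -/
def Hgate {ι : Type} [DecidableEq ι] (i : ι) (ψ : QState ι) : QState ι :=
  fun x => (((Real.sqrt 2)⁻¹ : ℝ) : ℂ) *
    (ψ (Function.update x i false) +
      (if x i = true then -1 else 1) * ψ (Function.update x i true))

/-- The Pauli-X (bit flip) gate `X_i` on qubit `i`. -/
def Xgate {ι : Type} [DecidableEq ι] (i : ι) (ψ : QState ι) : QState ι :=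
  fun x => ψ (Function.update x i (!(x i)))

/-- The generalized CNOT gate with control set `f` and target `t ∉ f`:
it flips bit `t` of `x` exactly when `∏_{j∈f} x_j = 1`. -/
def CNOTgate {ι : Type} [DecidableEq ι] (f : Finset ι) (t : ι) (ψ : QState ι) : QState ι :=
  fun x => ψ (if ∀ j ∈ f, x j = true then Function.update x t (!(x t)) else x)

/-- `|+⟩^{⊗n}`, the uniform superposition `2^{−n/2} ∑_x |x⟩`. -/
def plusAll (ι : Type) [Fintype ι] : QState ι :=
  fun _ => (((Real.sqrt 2)⁻¹ : ℝ) : ℂ) ^ (Fintype.card ι)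

/-- The computational-basis ket `|s⟩`. -/
def zketS {ι : Type} [Fintype ι] [DecidableEq ι] (s : ι → Bool) : QState ι :=
  fun x => if x = s then 1 else 0

/-- The Pauli-X-basis product ket: qubit `i` is `|+⟩` if `s i = false` and
`|−⟩` if `s i = true`, where `|±⟩ = (|0⟩ ± |1⟩)/√2`. -/
def xketS {ι : Type} [Fintype ι] (s : ι → Bool) : QState ι :=
  fun x => ∏ i, ((((Real.sqrt 2)⁻¹ : ℝ) : ℂ) * (if s i && x i then -1 else 1))

/-- Tensor product of a state of the qubits `κ` with a state of the qubits `ι`. -/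
def tensP {κ ι : Type} (φ : QState κ) (u : QState ι) : QState (κ ⊕ ι) :=
  fun x => φ (fun i => x (Sum.inl i)) * u (fun j => x (Sum.inr j))

/-- The partial inner product `(⟨φ|_κ ⊗ I)`, sending a state of the qubits
`κ ⊕ ι` to a state of the remaining qubits `ι`. -/
def pinner {κ ι : Type} [Fintype κ] [DecidableEq κ] (φ : QState κ) (w : QState (κ ⊕ ι)) :
    QState ι :=
  fun y => ∑ b : κ → Bool, (starRingEnd ℂ) (φ b) * w (Sum.elim b y)

/-- Tensor product of a single-qubit state on qubit `i` with a state of the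
remaining qubits. -/
def tensQ {ι : Type} [DecidableEq ι] (i : ι) (φ : Bool → ℂ) (ψ : QState {j : ι // j ≠ i}) :
    QState ι :=
  fun x => φ (x i) * ψ (fun j => x j.1)

/-- The partial inner product over the single qubit `i`. -/
def pinner1 {ι : Type} [DecidableEq ι] (i : ι) (φ : Bool → ℂ) (w : QState ι) :
    QState {j : ι // j ≠ i} :=
  fun y => ∑ b : Bool, (starRingEnd ℂ) (φ b) * w (fun j => if h : j = i then b else y ⟨j, h⟩)

/-- The hypergraph state `∏_{e∈E} C_e |+⟩^{⊗|V|}` of the hypergraph `(V, E)`. -/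
def hgState {ι : Type} [Fintype ι] (E : Finset (Finset ι)) : QState ι :=
  fun x => (∏ e ∈ E, csign e x) * plusAll ι x

/-- Sequential composition (operator product) of a list of operators. -/
def seqComp {α : Type} (fs : List (α → α)) : α → α := fs.foldr (· ∘ ·) id
/-- Qubit `i` of the input block 1,2,3 (for `i : Fin 3`, qubit `i+1`). -/
def qA (i : Fin 3) : (Fin 3 ⊕ Fin 3) ⊕ Fin 3 := Sum.inl (Sum.inl i)
/-- Qubit `i` of the middle block 4,5,6. -/
def qB (i : Fin 3) : (Fin 3 ⊕ Fin 3) ⊕ Fin 3 := Sum.inl (Sum.inr i)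
/-- Qubit `i` of the output block 7,8,9. -/
def qC (i : Fin 3) : (Fin 3 ⊕ Fin 3) ⊕ Fin 3 := Sum.inr i

def esg (b : Bool) : ℂ := if b then -1 else 1

lemma inner_bool (u v : Bool) :
    (∑ b : Bool, esg (u && b) * esg (b && v)) = if u = v then 2 else 0 := by
  rcases u <;> rcases v <;> simp [esg] <;> norm_num

lemma hsplit (f : ((Fin 3 ⊕ Fin 3) → Bool) → ℂ) :
    ∑ x : (Fin 3 ⊕ Fin 3) → Bool, f x
      = ∑ a : Fin 3 → Bool, ∑ m : Fin 3 → Bool, f (Sum.elim a m) := by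
  rw [show (∑ a : Fin 3 → Bool, ∑ m : Fin 3 → Bool, f (Sum.elim a m))
      = ∑ p : (Fin 3 → Bool) × (Fin 3 → Bool), f (Sum.elim p.1 p.2) from
    (Fintype.sum_prod_type (f := fun p => f (Sum.elim p.1 p.2))).symm]
  exact Fintype.sum_equiv (Equiv.sumArrowEquivProdArrow _ _ _) _ _
    (by intro x; congr 1; funext i; cases i <;> rfl)

set_option maxHeartbeats 1000000 in
/-- On nine qubits, applying `C_{{1,2,3}}` and the graph
edges `{i,i+3}`, `{i+3,i+6}` (`i = 1,2,3`) to `|ψ⟩ = ∑_y ψ_y |y⟩` on qubits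
1,2,3 and `|+⟩` on qubits 4,…,9, and then projecting qubits 1,…,6 onto
`⟨+|^{⊗6}`, teleports `CCZ|ψ⟩` to qubits 7,8,9:
`(⟨+|^{⊗6}_{1..6} ⊗ I) ∏_i C_{{i,i+3}} C_{{i+3,i+6}} · C_{{1,2,3}}
  (|ψ⟩_{123} ⊗ |+⟩^{⊗6}_{4..9}) = (1/8) ∑_y (−1)^{y₁y₂y₃} ψ_y |y⟩_{789}`. -/
theorem CCZnn_teleportation_all_plus (c : (Fin 3 → Bool) → ℂ) :
    pinner (xketS (fun _ : Fin 3 ⊕ Fin 3 => false))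
      (Cgate {qA 0, qB 0} (Cgate {qB 0, qC 0}
        (Cgate {qA 1, qB 1} (Cgate {qB 1, qC 1}
          (Cgate {qA 2, qB 2} (Cgate {qB 2, qC 2}
            (Cgate {qA 0, qA 1, qA 2}
              (fun x => c (fun i => x (qA i)) *
                (((Real.sqrt 2)⁻¹ : ℝ) : ℂ) ^ 6)))))))) =
      fun y : Fin 3 → Bool =>
        (8 : ℂ)⁻¹ * ((if y 0 && (y 1 && y 2) then (-1 : ℂ) else 1) * c y) := by
  funext y
  set s : ℂ := (((Real.sqrt 2)⁻¹ : ℝ) : ℂ) with hs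
  have h2 : s ^ 2 = 2⁻¹ := by
    rw [hs, ← Complex.ofReal_pow]; norm_num [Real.sq_sqrt]
  have hx : ∀ b : Fin 3 ⊕ Fin 3 → Bool,
      (starRingEnd ℂ) (xketS (fun _ : Fin 3 ⊕ Fin 3 => false) b) = s ^ 6 := by
    intro b
    simp [xketS, Finset.prod_const, hs]
  have hw : ∀ a m : Fin 3 → Bool,
      (Cgate {qA 0, qB 0} (Cgate {qB 0, qC 0}
        (Cgate {qA 1, qB 1} (Cgate {qB 1, qC 1}
          (Cgate {qA 2, qB 2} (Cgate {qB 2, qC 2}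
            (Cgate {qA 0, qA 1, qA 2}
              (fun x => c (fun i => x (qA i)) *
                (((Real.sqrt 2)⁻¹ : ℝ) : ℂ) ^ 6))))))) (Sum.elim (Sum.elim a m) y))
        = (esg (a 0 && (a 1 && a 2)) * c a * s ^ 6) *
            ∏ i : Fin 3, (esg (a i && m i) * esg (m i && y i)) := by
    intro a m
    simp only [Cgate, csign, qA, qB, qC, Sum.elim_inl, Sum.elim_inr,
      Finset.mem_insert, Finset.mem_singleton, forall_eq_or_imp, forall_eq,
      ← Bool.and_eq_true, Fin.prod_univ_three, esg, hs, Bool.and_assoc]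
    ring
  simp only [pinner]
  rw [hsplit]
  have step : ∀ a : Fin 3 → Bool,
      (∑ m : Fin 3 → Bool,
        (starRingEnd ℂ) (xketS (fun _ : Fin 3 ⊕ Fin 3 => false) (Sum.elim a m)) *
          (Cgate {qA 0, qB 0} (Cgate {qB 0, qC 0}
            (Cgate {qA 1, qB 1} (Cgate {qB 1, qC 1}
              (Cgate {qA 2, qB 2} (Cgate {qB 2, qC 2}
                (Cgate {qA 0, qA 1, qA 2}
                  (fun x => c (fun i => x (qA i)) *
                    (((Real.sqrt 2)⁻¹ : ℝ) : ℂ) ^ 6))))))) (Sum.elim (Sum.elim a m) y)))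
        = (s ^ 6 * (esg (a 0 && (a 1 && a 2)) * c a * s ^ 6)) *
            ∏ i : Fin 3, (if a i = y i then (2:ℂ) else 0) := by
    intro a
    simp only [← inner_bool]
    rw [Fintype.prod_sum, Finset.mul_sum]
    refine Finset.sum_congr rfl fun m _ => ?_
    rw [hx, hw a m]; ring
  simp only [hs]
  simp only [step]
  rw [Finset.sum_eq_single y ?h1 ?h2]
  · have h12 : s ^ 6 * s ^ 6 = 64⁻¹ := by
      rw [← pow_add, show (6+6 : ℕ) = 2*6 by rfl, pow_mul, h2]; norm_num
    simp only [if_pos rfl, Fin.prod_univ_three, esg]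
    rcases hb : (y 0 && (y 1 && y 2)) <;> simp
    · linear_combination (8 * c y) * h12
    · linear_combination (8 * c y) * h12
  · intro a _ hne
    obtain ⟨i, hi⟩ := Function.ne_iff.mp hne
    rw [Finset.prod_eq_zero (Finset.mem_univ i) (show (if a i = y i then (2:ℂ) else 0) = 0 from if_neg hi), mul_zero]
  · intro h; exact absurd (Finset.mem_univ y) h
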